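/- For ε > 0 and positive integers x_1,…,x_m, as ε → 0⁺ one has Φ_ε(x_1,…,x_m) = ε^{-m} Σ_{σ∈S_m} [ (Π_{j=1}^m S_j^σ)^{-1} − (ε/2) Σ_{r=1}^m S_r^σ/(Π_{j=1}^m S_j^σ) ] + O(ε^{2−m}), where S_j^σ = x_{σ(1)}+⋯+x_{σ(j)}. -/

import Mathlib

open Filter Topology Asymptotics Finset


lemma core_ineq {t : ℝ} (ht : 0 < t) (ht1 : t ≤ 1) :
    |(Real.exp t - 1)⁻¹ - ((t)⁻¹ - 1/2)| ≤ 2 * t := by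
  have hR : |Real.exp t - (1 + t + t^2/2)| ≤ t^3 := by
    have h := Real.exp_bound (n := 3) (by rw [abs_of_pos ht]; exact ht1) (by norm_num)
    rw [abs_of_pos ht] at h
    have hsum : ∑ m ∈ Finset.range 3, t ^ m / (m.factorial : ℝ) = 1 + t + t^2/2 := by
      rw [Finset.sum_range_succ, Finset.sum_range_succ, Finset.sum_range_succ,
        Finset.sum_range_zero]
      norm_num
    rw [hsum] at h
    have h2 : t ^ 3 * ((Nat.succ 3 : ℝ) / ((Nat.factorial 3 : ℝ) * 3)) ≤ t^3 := by
      have : ((Nat.succ 3 : ℝ) / ((Nat.factorial 3 : ℝ) * 3)) = 2/9 := by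
        norm_num [Nat.factorial]
      rw [this]
      nlinarith [pow_pos ht 3]
    exact h.trans h2
  set R := Real.exp t - (1 + t + t^2/2) with hRdef
  have hRdef2 : R = Real.exp t - (1 + t + t^2/2) := hRdef
  clear_value R
  have habs := abs_le.mp hR
  have hden : t ≤ Real.exp t - 1 := by linarith [Real.add_one_le_exp t]
  have hdenpos : 0 < Real.exp t - 1 := lt_of_lt_of_le ht hden
  have key : (Real.exp t - 1)⁻¹ - (t⁻¹ - 1/2) =
      (-R + t^3/4 + t*R/2) / (t * (Real.exp t - 1)) := by
    have hN : -R + t^3/4 + t*R/2 = t - (Real.exp t - 1) + t*(Real.exp t - 1)/2 := by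
      rw [hRdef2]; ring
    rw [hN]
    field_simp
    ring
  rw [key, abs_div]
  have h4 : t^4 ≤ t^3 := by nlinarith [pow_pos ht 3]
  have hu : t * R ≤ t ^ 4 := by
    calc t * R ≤ t * t^3 := mul_le_mul_of_nonneg_left habs.2 ht.le
    _ = t^4 := by ring
  have hl : -(t^4) ≤ t * R := by
    calc -(t^4) = t * (-(t^3)) := by ring
    _ ≤ t * R := mul_le_mul_of_nonneg_left habs.1 ht.le
  have h3pos : (0:ℝ) < t^3 := pow_pos ht 3
  have hnum : |-R + t^3/4 + t*R/2| ≤ 2 * t^3 := by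
    rw [abs_le]; constructor <;> linarith
  have hdenabs : t^2 ≤ |t * (Real.exp t - 1)| := by
    rw [abs_of_pos (by positivity)]
    nlinarith
  have h2pos : (0:ℝ) < t^2 := by positivity
  calc |-R + t^3/4 + t*R/2| / |t * (Real.exp t - 1)| ≤ (2*t^3) / t^2 :=
        div_le_div₀ (by positivity) hnum h2pos hdenabs
  _ = 2 * t := by field_simp


lemma mem_Ioc01 : Set.Ioc (0:ℝ) 1 ∈ 𝓝[>] (0:ℝ) := Ioc_mem_nhdsGT one_pos

lemma id_isBigO_inv : (fun ε : ℝ => ε) =O[𝓝[>] (0:ℝ)] (fun ε : ℝ => ε⁻¹) := by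
  apply IsBigO.of_bound 1
  filter_upwards [mem_Ioc01] with ε hε
  have h1 : (1:ℝ) ≤ ε⁻¹ := (one_le_inv₀ hε.1).mpr hε.2
  rw [one_mul, Real.norm_eq_abs, Real.norm_eq_abs, abs_of_pos hε.1, abs_of_pos (inv_pos.mpr hε.1)]
  exact hε.2.trans h1

lemma prod_bigO_inv {ι : Type*} (s : Finset ι) (D : ι → ℝ → ℝ)
    (hD : ∀ j ∈ s, (D j) =O[𝓝[>] (0:ℝ)] (fun ε => ε⁻¹)) :
    (fun ε => ∏ j ∈ s, D j ε) =O[𝓝[>] (0:ℝ)] (fun ε : ℝ => (ε⁻¹) ^ s.card) := by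
  classical
  induction s using Finset.induction_on with
  | empty => simpa using isBigO_refl (fun _ : ℝ => (1:ℝ)) _
  | insert a s ha ih =>
    have h1 := (hD a (mem_insert_self a s)).mul (ih fun j hj => hD j (mem_insert_of_mem hj))
    refine h1.congr (fun ε => ?_) (fun ε => ?_)
    · rw [prod_insert ha]
    · rw [card_insert_of_notMem ha, pow_succ]; ring

lemma prod_diff_bigO {ι : Type*} (s : Finset ι) (D A : ι → ℝ → ℝ)
    (hD : ∀ j ∈ s, (D j) =O[𝓝[>] (0:ℝ)] (fun ε => ε⁻¹))
    (hA : ∀ j ∈ s, (A j) =O[𝓝[>] (0:ℝ)] (fun ε => ε⁻¹))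
    (hDA : ∀ j ∈ s, (fun ε => D j ε - A j ε) =O[𝓝[>] (0:ℝ)] (fun ε => ε)) :
    (fun ε => ∏ j ∈ s, D j ε - ∏ j ∈ s, A j ε)
      =O[𝓝[>] (0:ℝ)] (fun ε : ℝ => ε ^ 2 * (ε⁻¹) ^ s.card) := by
  classical
  induction s using Finset.induction_on with
  | empty => simpa using isBigO_zero _ _
  | insert a s ha ih =>
    have ih' := ih (fun j hj => hD j (mem_insert_of_mem hj))
      (fun j hj => hA j (mem_insert_of_mem hj)) (fun j hj => hDA j (mem_insert_of_mem hj))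
    have hb : (fun ε : ℝ => ε * (ε⁻¹) ^ s.card) =O[𝓝[>] (0:ℝ)]
        (fun ε : ℝ => ε ^ 2 * (ε⁻¹) ^ (s.card + 1)) := by
      apply Filter.EventuallyEq.isBigO
      filter_upwards [self_mem_nhdsWithin] with ε (hε : (0:ℝ) < ε)
      field_simp
      ring_nf; simp [hε.ne']
    have h1 : (fun ε => (D a ε - A a ε) * ∏ j ∈ s, D j ε) =O[𝓝[>] (0:ℝ)]
        (fun ε : ℝ => ε ^ 2 * (ε⁻¹) ^ (s.card + 1)) := by
      have := (hDA a (mem_insert_self a s)).mul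
        (prod_bigO_inv s D fun j hj => hD j (mem_insert_of_mem hj))
      exact this.trans hb
    have h2 : (fun ε => A a ε * (∏ j ∈ s, D j ε - ∏ j ∈ s, A j ε)) =O[𝓝[>] (0:ℝ)]
        (fun ε : ℝ => ε ^ 2 * (ε⁻¹) ^ (s.card + 1)) := by
      have := (hA a (mem_insert_self a s)).mul ih'
      refine this.congr_right fun ε => ?_
      rw [pow_succ]; ring
    have := h1.add h2
    refine this.congr (fun ε => ?_) (fun ε => ?_)
    · rw [prod_insert ha, prod_insert ha]; ring
    · rw [card_insert_of_notMem ha]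

lemma poly_expand {ι : Type*} (s : Finset ι) (c : ι → ℝ) :
    ∃ Q : ℝ → ℝ, Continuous Q ∧
      ∀ ε : ℝ, ∏ j ∈ s, (1 + c j * ε) = 1 + (∑ j ∈ s, c j) * ε + ε ^ 2 * Q ε := by
  classical
  induction s using Finset.induction_on with
  | empty => exact ⟨fun _ => 0, continuous_const, fun ε => by simp⟩
  | insert a s ha ih =>
    obtain ⟨Q, hQc, hQ⟩ := ih
    refine ⟨fun ε => Q ε + c a * (∑ j ∈ s, c j) + c a * ε * Q ε, by continuity, fun ε => ?_⟩
    rw [prod_insert ha, hQ ε, sum_insert ha]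
    ring


lemma claimA (S : ℝ) (hS : 0 < S) :
    (fun ε : ℝ => (Real.exp (ε * S) - 1)⁻¹ - ((ε * S)⁻¹ - 1/2))
      =O[𝓝[>] (0:ℝ)] (fun ε : ℝ => ε) := by
  apply IsBigO.of_bound (2 * S)
  filter_upwards [Ioc_mem_nhdsGT (inv_pos.mpr hS)] with ε hε
  have ht : 0 < ε * S := mul_pos hε.1 hS
  have ht1 : ε * S ≤ 1 := by
    rw [← inv_mul_cancel₀ hS.ne']
    exact mul_le_mul_of_nonneg_right hε.2 hS.le
  have := core_ineq ht ht1
  rw [Real.norm_eq_abs, Real.norm_eq_abs, abs_of_pos hε.1]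
  calc |(Real.exp (ε * S) - 1)⁻¹ - ((ε * S)⁻¹ - 1/2)| ≤ 2 * (ε * S) := this
  _ = 2 * S * ε := by ring

lemma A_bigO (S : ℝ) (hS : 0 < S) :
    (fun ε : ℝ => (ε * S)⁻¹ - 1/2) =O[𝓝[>] (0:ℝ)] (fun ε : ℝ => ε⁻¹) := by
  apply IsBigO.of_bound (S⁻¹ + 1/2)
  filter_upwards [Ioc_mem_nhdsGT one_pos] with ε hε
  have hεpos := hε.1
  have hie : (1:ℝ) ≤ ε⁻¹ := (one_le_inv₀ hεpos).mpr hε.2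
  have hi : (ε * S)⁻¹ = S⁻¹ * ε⁻¹ := by rw [mul_inv]; ring
  have hSi : (0:ℝ) < S⁻¹ := inv_pos.mpr hS
  have hεi : (0:ℝ) < ε⁻¹ := inv_pos.mpr hεpos
  rw [Real.norm_eq_abs, Real.norm_eq_abs, abs_of_pos hεi, abs_le]
  constructor <;> nlinarith [mul_pos hSi hεi]






lemma zpow_split {ε : ℝ} (hne : ε ≠ 0) (m : ℕ) :
    ε ^ ((2:ℤ) - m) = ε ^ 2 * (ε⁻¹) ^ m := by
  rw [zpow_sub₀ hne, inv_pow, div_eq_mul_inv, zpow_natCast]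
  norm_num

lemma per_sigma (m : ℕ) (S : Fin m → ℝ) (hS : ∀ j, 0 < S j) :
    (fun ε : ℝ => ∏ j, (Real.exp (ε * S j) - 1)⁻¹
       - ε ^ (-(m:ℤ)) * ((∏ j, S j)⁻¹ - ε / 2 * ∑ r, S r / ∏ j, S j))
      =O[𝓝[>] (0:ℝ)] fun ε : ℝ => ε ^ ((2:ℤ) - m) := by
  classical
  set P : ℝ := ∏ j, S j with hPdef
  have hP : 0 < P := Finset.prod_pos (fun j _ => hS j)
  set A : Fin m → ℝ → ℝ := fun j ε => (ε * S j)⁻¹ - 1/2 with hAdef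
  set D : Fin m → ℝ → ℝ := fun j ε => (Real.exp (ε * S j) - 1)⁻¹ with hDdef
  have hAO : ∀ j ∈ Finset.univ (α := Fin m), (A j) =O[𝓝[>] (0:ℝ)] (fun ε => ε⁻¹) :=
    fun j _ => A_bigO (S j) (hS j)
  have hDA : ∀ j ∈ Finset.univ (α := Fin m),
      (fun ε => D j ε - A j ε) =O[𝓝[>] (0:ℝ)] (fun ε => ε) :=
    fun j _ => claimA (S j) (hS j)
  have hDO : ∀ j ∈ Finset.univ (α := Fin m), (D j) =O[𝓝[>] (0:ℝ)] (fun ε => ε⁻¹) := by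
    intro j hj
    have := (hAO j hj).add ((hDA j hj).trans id_isBigO_inv)
    exact this.congr_left (fun ε => by ring)
  have hne : ∀ᶠ ε : ℝ in 𝓝[>] (0:ℝ), (0:ℝ) < ε := self_mem_nhdsWithin
  -- part 1 : prod D - prod A
  have hpart1 : (fun ε => ∏ j, D j ε - ∏ j, A j ε) =O[𝓝[>] (0:ℝ)]
      (fun ε : ℝ => ε ^ ((2:ℤ) - m)) := by
    have h := prod_diff_bigO Finset.univ D A hDO hAO hDA
    rw [Finset.card_univ, Fintype.card_fin] at h
    refine h.trans (Filter.EventuallyEq.isBigO ?_)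
    filter_upwards [hne] with ε hε
    rw [zpow_split hε.ne' m]
  -- part 2 : prod A - target
  obtain ⟨Q, hQc, hQ⟩ := poly_expand (Finset.univ (α := Fin m)) (fun j => -(S j)/2)
  have hpart2 : (fun ε => ∏ j, A j ε
      - ε ^ (-(m:ℤ)) * (P⁻¹ - ε / 2 * ∑ r, S r / P)) =O[𝓝[>] (0:ℝ)]
      (fun ε : ℝ => ε ^ ((2:ℤ) - m)) := by
    have heq : (fun ε : ℝ => ∏ j, A j ε
        - ε ^ (-(m:ℤ)) * (P⁻¹ - ε / 2 * ∑ r, S r / P))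
        =ᶠ[𝓝[>] (0:ℝ)] (fun ε : ℝ => (P⁻¹ * Q ε) * ε ^ ((2:ℤ) - m)) := by
      filter_upwards [hne] with ε hε
      have hεne : ε ≠ 0 := hε.ne'
      have h1 : ∀ j : Fin m, A j ε = (ε * S j)⁻¹ * (1 + (-(S j)/2) * ε) := by
        intro j
        rw [hAdef]
        have := (hS j).ne'
        field_simp
        ring
      have hprodinv : ∏ j : Fin m, (ε * S j)⁻¹ = (ε ^ m)⁻¹ * P⁻¹ := by
        rw [Finset.prod_inv_distrib, Finset.prod_mul_distrib, Finset.prod_const,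
          Finset.card_univ, Fintype.card_fin, mul_inv]
      have hsumc : ∑ j : Fin m, (-(S j)/2) = -(∑ j, S j)/2 := by
        rw [← Finset.sum_div, ← Finset.sum_neg_distrib]
      have hsumdiv : ∑ r : Fin m, S r / P = (∑ r, S r) * P⁻¹ := by
        rw [← Finset.sum_div, div_eq_mul_inv]
      calc ∏ j, A j ε - ε ^ (-(m:ℤ)) * (P⁻¹ - ε / 2 * ∑ r, S r / P)
          = (∏ j : Fin m, (ε * S j)⁻¹) * (∏ j : Fin m, (1 + (-(S j)/2) * ε))
            - ε ^ (-(m:ℤ)) * (P⁻¹ - ε / 2 * ∑ r, S r / P) := by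
            rw [← Finset.prod_mul_distrib]
            congr 1
            exact Finset.prod_congr rfl (fun j _ => h1 j)
      _ = (P⁻¹ * Q ε) * ε ^ ((2:ℤ) - m) := by
            rw [hprodinv, hQ ε, hsumc, hsumdiv, zpow_split hεne m,
              zpow_neg, zpow_natCast, inv_pow]
            have hεm : (ε:ℝ) ^ m ≠ 0 := pow_ne_zero _ hεne
            field_simp
            ring
    refine heq.trans_isBigO ?_
    have hQO : (fun ε : ℝ => P⁻¹ * Q ε) =O[𝓝[>] (0:ℝ)] (fun _ : ℝ => (1:ℝ)) := by
      exact (((continuous_const.mul hQc).tendsto 0).mono_left nhdsWithin_le_nhds).isBigO_one ℝ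
    have := hQO.mul (isBigO_refl (fun ε : ℝ => ε ^ ((2:ℤ) - m)) _)
    exact this.congr_right (fun ε => by ring)
  have := hpart1.add hpart2
  exact this.congr_left (fun ε => by ring)

/-- Two-term semiclassical expansion of
`Φ_ε(x) = Σ_{σ∈S_m} Π_j (e^{ε S_j^σ} - 1)⁻¹`, `S_j^σ = x_{σ(1)}+⋯+x_{σ(j)}`:
`Φ_ε = ε^{-m} Σ_σ [ (Π_j S_j^σ)⁻¹ - (ε/2) Σ_r S_r^σ / Π_j S_j^σ ] + O(ε^{2-m})`. -/
theorem stmt_6 (m : ℕ) (x : Fin m → ℕ) (hx : ∀ i, 0 < x i) :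
    (fun ε : ℝ =>
        (∑ σ : Equiv.Perm (Fin m), ∏ j : Fin m,
          (Real.exp (ε * ((∑ i ∈ Finset.univ.filter (· ≤ j), x (σ i) : ℕ) : ℝ)) - 1)⁻¹)
        - ε ^ (-(m : ℤ)) *
          ∑ σ : Equiv.Perm (Fin m),
            ((∏ j : Fin m, ((∑ i ∈ Finset.univ.filter (· ≤ j), x (σ i) : ℕ) : ℝ))⁻¹
              - ε / 2 *
                ∑ r : Fin m, ((∑ i ∈ Finset.univ.filter (· ≤ r), x (σ i) : ℕ) : ℝ)
                  / ∏ j : Fin m, ((∑ i ∈ Finset.univ.filter (· ≤ j), x (σ i) : ℕ) : ℝ)))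
      =O[𝓝[>] 0] fun ε : ℝ => ε ^ ((2 : ℤ) - m) := by
  classical
  have hpos : ∀ (σ : Equiv.Perm (Fin m)) (j : Fin m),
      (0:ℝ) < ((∑ i ∈ Finset.univ.filter (· ≤ j), x (σ i) : ℕ) : ℝ) := by
    intro σ j
    have : 0 < ∑ i ∈ Finset.univ.filter (· ≤ j), x (σ i) :=
      Finset.sum_pos (fun i _ => hx (σ i))
        ⟨j, Finset.mem_filter.mpr ⟨Finset.mem_univ j, le_refl j⟩⟩
    exact_mod_cast this
  have h := Asymptotics.IsBigO.sum (l := 𝓝[>] (0:ℝ)) (s := Finset.univ)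
    (A := fun (σ : Equiv.Perm (Fin m)) (ε : ℝ) =>
      ∏ j : Fin m,
          (Real.exp (ε * ((∑ i ∈ Finset.univ.filter (· ≤ j), x (σ i) : ℕ) : ℝ)) - 1)⁻¹
        - ε ^ (-(m : ℤ)) *
          ((∏ j : Fin m, ((∑ i ∈ Finset.univ.filter (· ≤ j), x (σ i) : ℕ) : ℝ))⁻¹
            - ε / 2 *
              ∑ r : Fin m, ((∑ i ∈ Finset.univ.filter (· ≤ r), x (σ i) : ℕ) : ℝ)
                / ∏ j : Fin m, ((∑ i ∈ Finset.univ.filter (· ≤ j), x (σ i) : ℕ) : ℝ)))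
    (g := fun ε : ℝ => ε ^ ((2 : ℤ) - m))
    (fun σ _ => per_sigma m
      (fun j => ((∑ i ∈ Finset.univ.filter (· ≤ j), x (σ i) : ℕ) : ℝ)) (hpos σ))
  refine h.congr_left (fun ε => ?_)
  simp only [Finset.sum_apply]
  rw [Finset.sum_sub_distrib, ← Finset.mul_sum]
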